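/- For all positive integers s and n, the rational function f = 1/(x₁^s + ⋯ + xₙ^s) ∈ ℚ(x₁,…,xₙ) is (τ_{q,x₁},…,τ_{q,xₙ})-summable: there exist g₁,…,gₙ ∈ ℚ(x₁,…,xₙ) with f = Σ_{i=1}^n (τ_{q,x_i}(g_i) − g_i). In particular, for n > 1 one may take g_i = τ_{q,x_{i+1}}···τ_{q,xₙ}(b/d) with b = 1/(q^{−s} − 1) and d = x₁^s + ⋯ + xₙ^s. -/

import Mathlib

noncomputable section

/-- The field of rational functions `F(x₁,…,xₙ)`, modeled as the fraction field of the
multivariate polynomial ring. -/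
abbrev MvRat (F : Type*) [Field F] (n : ℕ) := FractionRing (MvPolynomial (Fin n) F)

/-- The image of the variable `xᵢ` in `F(x₁,…,xₙ)`. -/
def xv {F : Type*} [Field F] {n : ℕ} (i : Fin n) : MvRat F n :=
  algebraMap (MvPolynomial (Fin n) F) (MvRat F n) (MvPolynomial.X i)

/-- The subfield `F(x₂,…,xₙ)` of `F(x₁,…,xₙ)` (the variable `x₁` has index `0`). -/
def hatField (F : Type*) [Field F] (n : ℕ) [NeZero n] : Subfield (MvRat F n) :=
  Subfield.closure (Set.range (algebraMap F (MvRat F n)) ∪ (xv '' {i : Fin n | i ≠ 0}))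

/-- `a` is a polynomial in `x1` over the subfield `E` of degree `< D`. -/
def IsPolyDeg {L : Type*} [Field L] (E : Subfield L) (x1 : L) (D : ℕ) (a : L) : Prop :=
  ∃ cf : Fin D → E, a = ∑ k : Fin D, (cf k : L) * x1 ^ (k : ℕ)

/-- `a` is a polynomial in `x1` over the subfield `E`, i.e. `a ∈ E[x1]`. -/
def IsPolyE {L : Type*} [Field L] (E : Subfield L) (x1 a : L) : Prop :=
  ∃ D : ℕ, IsPolyDeg E x1 D a

/-- `a` is a Laurent polynomial in `x1` over the subfield `E`, i.e. `a ∈ E[x1, x1⁻¹]`. -/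
def IsLaurent {L : Type*} [Field L] (E : Subfield L) (x1 a : L) : Prop :=
  ∃ (s : Finset ℤ) (cf : ℤ → L), (∀ k ∈ s, cf k ∈ E) ∧ a = ∑ k ∈ s, cf k * x1 ^ k

/-- For a family `θ` of `F`-automorphisms and an exponent vector `α`,
the product `∏ i, θᵢ^(αᵢ)` (the element `θ_x^α` of the group generated by the `θᵢ`). -/
def thetaPowS {F L : Type*} [CommSemiring F] [Semiring L] [Algebra F L] {ι : Type*} [Fintype ι]
    (θ : ι → (L ≃ₐ[F] L)) (α : ι → ℤ) : L ≃ₐ[F] L :=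
  (Finset.univ.toList.map fun i => θ i ^ α i).prod

/-- Membership in the space `V_{[d]_G,j}`: `f` is a finite sum of fractions `a_g / g(d)^j`
with `g` in the group `G` and `a_g ∈ E[x₁]` of degree `< D` (`= deg_{x₁} d`). -/
def MemV {F L : Type*} [Field F] [Field L] [Algebra F L] (G : Set (L ≃ₐ[F] L))
    (E : Subfield L) (x1 : L) (dd : L) (D j : ℕ) (f : L) : Prop :=
  ∃ s : Finset (L ≃ₐ[F] L), ↑s ⊆ G ∧ ∃ a : (L ≃ₐ[F] L) → L,
    (∀ g ∈ s, IsPolyDeg E x1 D (a g)) ∧ f = ∑ g ∈ s, a g / (g dd) ^ j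

/-- `p` and `p'` are `G`-equivalent: `p = c · g(p')` for some nonzero `c ∈ F` and `g ∈ G`. -/
def GEquivSet {F L : Type*} [Field F] [Field L] [Algebra F L] (G : Set (L ≃ₐ[F] L))
    (p p' : L) : Prop :=
  ∃ c : F, c ≠ 0 ∧ ∃ g ∈ G, p = algebraMap F L c * g p'

/-- `w` divides `p` inside the ring `E[x1]`. -/
def DvdE {L : Type*} [Field L] (E : Subfield L) (x1 w p : L) : Prop :=
  ∃ u : L, IsPolyE E x1 u ∧ p = w * u

/-- `p ∈ E[x₁]` is normal w.r.t. `θ1`: `gcd(p, θ1^ℓ(p)) = 1` for all nonzero `ℓ ∈ ℤ`,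
i.e. every common divisor (in `E[x₁]`) of `p` and `θ1^ℓ(p)` is a unit (lies in `E`). -/
def NormalWrt {F L : Type*} [Field F] [Field L] [Algebra F L] (E : Subfield L) (x1 : L)
    (θ1 : L ≃ₐ[F] L) (p : L) : Prop :=
  ∀ ℓ : ℤ, ℓ ≠ 0 → ∀ w : L, IsPolyE E x1 w →
    DvdE E x1 w p → DvdE E x1 w ((θ1 ^ ℓ) p) → w ∈ E

/-- The isotropy group of `p` (in exponent-vector coordinates): the subgroup of `ℤ^ι`
of all `α` with `Θ(α)(p) = c·p` for some nonzero `c ∈ F`. -/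
def isotropyZ {F L : Type*} [Field F] [Field L] [Algebra F L] {ι : Type*}
    (Θ : (ι → ℤ) → (L ≃ₐ[F] L))
    (hadd : ∀ α β, Θ (α + β) = Θ α * Θ β) (h0 : Θ 0 = 1) (p : L) :
    AddSubgroup (ι → ℤ) where
  carrier := {α | ∃ c : F, c ≠ 0 ∧ Θ α p = algebraMap F L c * p}
  zero_mem' := ⟨1, one_ne_zero, by simp [h0]⟩
  add_mem' := by
    rintro α β ⟨c, hc, hcp⟩ ⟨e, he, hep⟩
    refine ⟨e * c, mul_ne_zero he hc, ?_⟩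
    rw [hadd, AlgEquiv.mul_apply, hep, map_mul, AlgEquiv.commutes, hcp, map_mul]
    ring
  neg_mem' := by
    rintro α ⟨c, hc, hcp⟩
    refine ⟨c⁻¹, inv_ne_zero hc, ?_⟩
    have h1 : Θ (-α) (Θ α p) = p := by
      rw [← AlgEquiv.mul_apply, ← hadd, neg_add_cancel, h0, AlgEquiv.one_apply]
    rw [hcp, map_mul, AlgEquiv.commutes] at h1
    have hc0 : (algebraMap F L) c ≠ 0 :=
      (map_ne_zero_iff _ (algebraMap F L).injective).mpr hc
    rw [map_inv₀, eq_inv_mul_iff_mul_eq₀ hc0]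
    exact h1

end


section myhelpers

open scoped BigOperators

private lemma my_zpow_apply {n : ℕ} (e : MvRat ℚ n ≃ₐ[ℚ] MvRat ℚ n) (u : ℚ) (hu : u ≠ 0)
    (a : MvRat ℚ n) (h : e a = algebraMap ℚ (MvRat ℚ n) u * a) (m : ℤ) :
    (e ^ m) a = algebraMap ℚ (MvRat ℚ n) (u ^ m) * a := by
  have hA : algebraMap ℚ (MvRat ℚ n) u ≠ 0 :=
    (map_ne_zero_iff _ (algebraMap ℚ (MvRat ℚ n)).injective).mpr hu
  have hsymm : e.symm a = algebraMap ℚ (MvRat ℚ n) u⁻¹ * a := by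
    have h2 := congrArg e.symm h
    rw [AlgEquiv.symm_apply_apply, map_mul, AlgEquiv.commutes] at h2
    rw [map_inv₀, eq_comm, inv_mul_eq_iff_eq_mul₀ hA]
    exact h2
  induction m using Int.induction_on with
  | zero => simp
  | succ k ih =>
      have h1 : (e ^ ((k : ℤ) + 1)) a = (e ^ (k : ℤ)) (e a) := by
        rw [zpow_add_one, AlgEquiv.mul_apply]
      rw [h1, h, map_mul, AlgEquiv.commutes, ih, zpow_add_one₀ hu, map_mul]
      ring
  | pred k ih =>
      have h1 : (e ^ (-(k : ℤ) - 1)) a = (e ^ (-(k : ℤ))) (e.symm a) := by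
        rw [zpow_sub_one, AlgEquiv.mul_apply]; rfl
      rw [h1, hsymm, map_mul, AlgEquiv.commutes, ih, zpow_sub_one₀ hu, map_mul, map_inv₀]
      ring

private lemma my_listprod_apply {n : ℕ} (q : ℚ) (hq0 : q ≠ 0)
    (τ : Fin n → (MvRat ℚ n ≃ₐ[ℚ] MvRat ℚ n))
    (hτ : ∀ i : Fin n, τ i (xv i) = algebraMap ℚ (MvRat ℚ n) q * xv i)
    (hτfix : ∀ i j : Fin n, i ≠ j → τ i (xv j) = xv j)
    (α : Fin n → ℤ) (l : Fin n) (L : List (Fin n)) :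
    ((L.map fun j => τ j ^ α j).prod) (xv l)
      = algebraMap ℚ (MvRat ℚ n) (q ^ ((L.map fun j => if j = l then α j else 0).sum)) * xv l := by
  induction L with
  | nil => simp
  | cons j t ih =>
      have hj : (τ j ^ α j) (xv l)
          = algebraMap ℚ (MvRat ℚ n) (q ^ (if j = l then α j else 0)) * xv l := by
        by_cases h : j = l
        · subst h
          simpa using my_zpow_apply (τ j) q hq0 (xv j) (hτ j) (α j)
        · have := my_zpow_apply (τ j) 1 one_ne_zero (xv l) (by simp [hτfix j l h]) (α j)
          simpa [h] using this
      rw [List.map_cons, List.prod_cons, AlgEquiv.mul_apply, ih, map_mul, AlgEquiv.commutes,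
        hj, List.map_cons, List.sum_cons, zpow_add₀ hq0, map_mul]
      ring

private lemma my_theta_apply {n : ℕ} (q : ℚ) (hq0 : q ≠ 0)
    (τ : Fin n → (MvRat ℚ n ≃ₐ[ℚ] MvRat ℚ n))
    (hτ : ∀ i : Fin n, τ i (xv i) = algebraMap ℚ (MvRat ℚ n) q * xv i)
    (hτfix : ∀ i j : Fin n, i ≠ j → τ i (xv j) = xv j)
    (α : Fin n → ℤ) (l : Fin n) :
    thetaPowS τ α (xv l) = algebraMap ℚ (MvRat ℚ n) (q ^ α l) * xv l := by
  have h := my_listprod_apply q hq0 τ hτ hτfix α l Finset.univ.toList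
  have hsum : ((Finset.univ.toList.map fun j => if j = l then α j else 0).sum) = α l := by
    rw [Finset.sum_map_toList]
    simp [Finset.sum_ite_eq']
  rw [thetaPowS, h, hsum]

end myhelpers

set_option maxHeartbeats 1000000 in
/-- **Example: q-summability of `1/(x₁^s+⋯+xₙ^s)`.** For all positive
integers `s` and `n`, `f = 1/(x₁^s+⋯+xₙ^s) ∈ ℚ(x₁,…,xₙ)` is
`(τ_{q,x₁},…,τ_{q,xₙ})`-summable; in particular for `n > 1` one may take the witnesses
`gᵢ = τ_{q,x_{i+1}}⋯τ_{q,xₙ}(b/d)` with `b = 1/(q^{−s} − 1)` and `d = x₁^s + ⋯ + xₙ^s`. -/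
theorem stmt_16 {n : ℕ} [NeZero n]
    (q : ℚ) (hq0 : q ≠ 0) (hq : ∀ m : ℤ, m ≠ 0 → q ^ m ≠ 1)
    (τ : Fin n → (MvRat ℚ n ≃ₐ[ℚ] MvRat ℚ n))
    (hτ : ∀ i : Fin n, τ i (xv i) = algebraMap ℚ (MvRat ℚ n) q * xv i)
    (hτfix : ∀ i j : Fin n, i ≠ j → τ i (xv j) = xv j)
    (s : ℕ) (hs : 1 ≤ s) :
    (∃ g : Fin n → MvRat ℚ n,
      1 / (∑ i : Fin n, xv i ^ s) = ∑ i : Fin n, (τ i (g i) - g i)) ∧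
    (1 < n →
      1 / (∑ i : Fin n, xv i ^ s) =
        ∑ i : Fin n,
          (τ i (thetaPowS τ (fun l : Fin n => if (i : ℕ) < (l : ℕ) then 1 else 0)
              (algebraMap ℚ (MvRat ℚ n) (q ^ (-(s : ℤ)) - 1)⁻¹ / ∑ l : Fin n, xv l ^ s))
            - thetaPowS τ (fun l : Fin n => if (i : ℕ) < (l : ℕ) then 1 else 0)
              (algebraMap ℚ (MvRat ℚ n) (q ^ (-(s : ℤ)) - 1)⁻¹ / ∑ l : Fin n, xv l ^ s))) := by
  set A := algebraMap ℚ (MvRat ℚ n) with hA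
  set c : ℚ := (q ^ (-(s : ℤ)) - 1)⁻¹ with hcdef
  set d : MvRat ℚ n := ∑ l : Fin n, xv l ^ s with hddef
  have hsne : -(s : ℤ) ≠ 0 := by
    simp only [neg_ne_zero, Ne, Int.natCast_eq_zero]; omega
  have hc' : q ^ (-(s : ℤ)) - 1 ≠ 0 := sub_ne_zero.mpr (hq _ hsne)
  -- the auxiliary family D
  set D : ℕ → MvRat ℚ n :=
    fun m => ∑ l : Fin n, A (q ^ (if m ≤ (l : ℕ) then (s : ℤ) else 0)) * xv l ^ s with hDdef
  -- θ_i applied to d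
  have hθd : ∀ i : Fin n,
      thetaPowS τ (fun l : Fin n => if (i : ℕ) < (l : ℕ) then 1 else 0) d = D ((i : ℕ) + 1) := by
    intro i
    rw [hddef, map_sum]
    refine Finset.sum_congr rfl fun l _ => ?_
    rw [map_pow, my_theta_apply q hq0 τ hτ hτfix _ l, mul_pow, ← map_pow]
    congr 1
    by_cases h : (i : ℕ) < (l : ℕ)
    · have h' : (i : ℕ) + 1 ≤ (l : ℕ) := h
      simp only [h, h', ↓reduceIte, zpow_one, zpow_natCast, hA]
    · have h' : ¬ ((i : ℕ) + 1 ≤ (l : ℕ)) := h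
      simp [h, h']
  -- τ_i applied to D (i+1)
  have hτD : ∀ i : Fin n, τ i (D ((i : ℕ) + 1)) = D (i : ℕ) := by
    intro i
    rw [hDdef, map_sum]
    refine Finset.sum_congr rfl fun l _ => ?_
    rw [map_mul, AlgEquiv.commutes, map_pow]
    by_cases h : l = i
    · subst h
      rw [hτ l, mul_pow, ← map_pow]
      have h1 : ¬ ((l : ℕ) + 1 ≤ (l : ℕ)) := by omega
      have h2 : (l : ℕ) ≤ (l : ℕ) := le_refl _
      rw [if_neg h1, if_pos h2]
      rw [← mul_assoc, ← map_mul]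
      congr 2
      simp [← zpow_natCast]
    · rw [hτfix i l (fun hil => h hil.symm)]
      congr 2
      have hln : (l : ℕ) ≠ (i : ℕ) := fun hli => h (Fin.ext hli)
      by_cases h2 : (i : ℕ) ≤ (l : ℕ)
      · have : (i : ℕ) + 1 ≤ (l : ℕ) := by omega
        simp [h2, this]
      · have : ¬ ((i : ℕ) + 1 ≤ (l : ℕ)) := by omega
        simp [h2, this]
  -- each summand
  have hstep : ∀ i : Fin n,
      τ i (thetaPowS τ (fun l : Fin n => if (i : ℕ) < (l : ℕ) then 1 else 0) (A c / d))
        - thetaPowS τ (fun l : Fin n => if (i : ℕ) < (l : ℕ) then 1 else 0) (A c / d)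
      = A c / D (i : ℕ) - A c / D ((i : ℕ) + 1) := by
    intro i
    have h1 : thetaPowS τ (fun l : Fin n => if (i : ℕ) < (l : ℕ) then 1 else 0) (A c / d)
        = A c / D ((i : ℕ) + 1) := by
      rw [map_div₀, AlgEquiv.commutes, hθd i]
    rw [h1, map_div₀, AlgEquiv.commutes, hτD i]
  -- d is nonzero
  have hd0 : d ≠ 0 := by
    have hrepr : d = algebraMap (MvPolynomial (Fin n) ℚ) (MvRat ℚ n)
        (∑ l : Fin n, MvPolynomial.X l ^ s) := by
      rw [hddef, map_sum]
      exact Finset.sum_congr rfl fun l _ => by rw [map_pow]; rfl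
    rw [hrepr, Ne,
      map_eq_zero_iff _ (IsFractionRing.injective (MvPolynomial (Fin n) ℚ) (MvRat ℚ n))]
    intro hP
    have h1 := congrArg (MvPolynomial.eval fun _ : Fin n => (1 : ℚ)) hP
    simp only [map_sum, map_pow, MvPolynomial.eval_X, one_pow, map_zero,
      Finset.sum_const, Finset.card_univ, Fintype.card_fin, nsmul_eq_mul, mul_one] at h1
    exact (NeZero.ne n) (Nat.cast_eq_zero.mp h1)
  -- values of D at 0 and n
  have hDn : D n = d := by
    rw [hDdef, hddef]
    refine Finset.sum_congr rfl fun l _ => ?_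
    have : ¬ (n ≤ (l : ℕ)) := by omega
    simp [this]
  have hD0 : D 0 = A (q ^ (s : ℤ)) * d := by
    rw [hDdef, hddef, Finset.mul_sum]
    refine Finset.sum_congr rfl fun l _ => ?_
    simp [mul_assoc]
  -- the key identity
  have key : (∑ i : Fin n,
      (τ i (thetaPowS τ (fun l : Fin n => if (i : ℕ) < (l : ℕ) then 1 else 0) (A c / d))
        - thetaPowS τ (fun l : Fin n => if (i : ℕ) < (l : ℕ) then 1 else 0) (A c / d)))
      = 1 / d := by
    have hsum : (∑ i : Fin n,
        (τ i (thetaPowS τ (fun l : Fin n => if (i : ℕ) < (l : ℕ) then 1 else 0) (A c / d))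
          - thetaPowS τ (fun l : Fin n => if (i : ℕ) < (l : ℕ) then 1 else 0) (A c / d)))
        = ∑ i ∈ Finset.range n, (A c / D i - A c / D (i + 1)) := by
      rw [Finset.sum_congr rfl fun i _ => hstep i]
      exact Fin.sum_univ_eq_sum_range (fun i => A c / D i - A c / D (i + 1)) n
    rw [hsum, Finset.sum_range_sub' (fun i => A c / D i) n, hDn, hD0]
    have e1 : A c / (A (q ^ (s : ℤ)) * d) = A (c * q ^ (-(s : ℤ))) / d := by
      rw [← div_div, ← map_div₀]
      congr 2
      rw [div_eq_mul_inv, ← zpow_neg]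
    rw [e1, div_sub_div_same, ← map_sub]
    have hrat : c * q ^ (-(s : ℤ)) - c = 1 := by
      have : c * q ^ (-(s : ℤ)) - c = (q ^ (-(s : ℤ)) - 1) * c := by ring
      rw [this, hcdef, mul_inv_cancel₀ hc']
    rw [hrat, map_one]
  refine ⟨⟨fun i => thetaPowS τ (fun l : Fin n => if (i : ℕ) < (l : ℕ) then 1 else 0) (A c / d),
    key.symm⟩, fun _ => key.symm⟩
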